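/- If T is an everywhere Kurepa tree and U is a downward closed Kurepa subtree of T, then U contains a downward closed everywhere Kurepa subtree of T. -/

import Mathlib

noncomputable section
open Cardinal Set

def omega1 : Ordinal := (Cardinal.aleph 1).ord

structure O1TreeStr (T : Type) [PartialOrder T] where
  ht : T → Ordinal
  ht_lt : ∀ t : T, ht t < omega1
  ht_mono : ∀ s t : T, s < t → ht s < ht t
  levels_countable : ∀ α : Ordinal, {t : T | ht t = α}.Countable
  pred_exists : ∀ (t : T) (β : Ordinal), β ≤ ht t → ∃ s : T, s ≤ t ∧ ht s = β
  pred_linear : ∀ s s' t : T, s ≤ t → s' ≤ t → s ≤ s' ∨ s' ≤ s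
  extend : ∀ (t : T) (β : Ordinal), ht t ≤ β → β < omega1 → ∃ s : T, t ≤ s ∧ ht s = β
  no_limit_branching : ∀ s t : T, ht s = ht t → Order.IsSuccLimit (ht s) →
    (∀ u : T, u < s ↔ u < t) → s = t

variable {T : Type} [PartialOrder T]

def IsBranchIn (τ : O1TreeStr T) (A : Set T) (b : Set T) : Prop :=
  b ⊆ A ∧ IsChain (· ≤ ·) b ∧ ∀ α < omega1, ∃ t ∈ b, τ.ht t = α

def IsBranch (τ : O1TreeStr T) (b : Set T) : Prop := IsBranchIn τ Set.univ b

def IsKurepaSet (τ : O1TreeStr T) (A : Set T) : Prop :=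
  Cardinal.aleph 2 ≤ Cardinal.mk {b : Set T // IsBranchIn τ A b}

def EverywhereKurepa (τ : O1TreeStr T) : Prop :=
  ∀ x : T, IsKurepaSet τ {y | y ≤ x ∨ x ≤ y}

def DownwardClosed (τ : O1TreeStr T) (U : Set T) : Prop :=
  ∀ s t : T, t ∈ U → s ≤ t → s ∈ U

lemma eq_of_le_of_ht_eq (τ : O1TreeStr T) {s u : T} (h : s ≤ u) (hht : τ.ht s = τ.ht u) :
    s = u := by
  rcases h.lt_or_eq with h' | h'
  · exact absurd hht (ne_of_lt (τ.ht_mono _ _ h'))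
  · exact h'

lemma ht_le_of_le (τ : O1TreeStr T) {s t : T} (h : s ≤ t) : τ.ht s ≤ τ.ht t := by
  rcases h.lt_or_eq with h' | h'
  · exact (τ.ht_mono _ _ h').le
  · exact h' ▸ le_rfl

/-- If `b` is a branch all of whose elements are comparable with `t`, then every `s ≤ t`
belongs to `b`. -/
lemma mem_of_branch_le (τ : O1TreeStr T) {A b : Set T} {s t : T}
    (hb : IsBranchIn τ A b) (hbt : ∀ u ∈ b, u ≤ t ∨ t ≤ u) (hst : s ≤ t) : s ∈ b := by
  obtain ⟨u, hu, hus⟩ := hb.2.2 (τ.ht s) (τ.ht_lt s)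
  rcases hbt u hu with h | h
  · rcases τ.pred_linear s u t hst h with h' | h'
    · rwa [eq_of_le_of_ht_eq τ h' hus.symm]
    · rwa [← eq_of_le_of_ht_eq τ h' hus]
  · have h1 : τ.ht t ≤ τ.ht s := hus ▸ ht_le_of_le τ h
    have h2 : τ.ht s = τ.ht t := le_antisymm (ht_le_of_le τ hst) h1
    have hst' : s = t := eq_of_le_of_ht_eq τ hst h2
    have htu : t = u := eq_of_le_of_ht_eq τ h (hus ▸ h2.symm ▸ rfl)
    rw [hst', htu]; exact hu

/-- The underlying type of an `O1TreeStr` has cardinality at most `ℵ₁`. -/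
lemma mk_le_aleph_one (τ : O1TreeStr T) : (Cardinal.mk T) ≤ Cardinal.aleph 1 := by
  set e := Ordinal.ToType.mk (o := omega1) with he
  have hinj : Function.Injective
      (fun t : T => (⟨e ⟨τ.ht t, τ.ht_lt t⟩, ⟨t, by simp [he]⟩⟩ :
        Σ β : omega1.ToType, {t : T // τ.ht t = ((e.symm β : Set.Iio omega1) : Ordinal)})) := by
    intro t t' h
    exact congrArg (fun p : (Σ β : omega1.ToType,
      {t : T // τ.ht t = ((e.symm β : Set.Iio omega1) : Ordinal)}) => p.2.1) h
  have h0 : Cardinal.lift (Cardinal.mk T) ≤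
      Cardinal.lift (Cardinal.mk (Σ β : omega1.ToType,
        {t : T // τ.ht t = ((e.symm β : Set.Iio omega1) : Ordinal)})) :=
    Cardinal.lift_mk_le'.mpr ⟨_, hinj⟩
  rw [Cardinal.lift_uzero] at h0
  have h1 : Cardinal.mk (Σ β : omega1.ToType,
      {t : T // τ.ht t = ((e.symm β : Set.Iio omega1) : Ordinal)}) ≤ Cardinal.aleph 1 := by
    have hcount : ∀ β : omega1.ToType,
        Cardinal.mk {t : T // τ.ht t = ((e.symm β : Set.Iio omega1) : Ordinal)} ≤ ℵ₀ := by
      intro β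
      have h := τ.levels_countable ((e.symm β : Set.Iio omega1) : Ordinal)
      have : Countable {t : T // τ.ht t = ((e.symm β : Set.Iio omega1) : Ordinal)} :=
        h.to_subtype
      exact Cardinal.mk_le_aleph0_iff.mpr this
    calc Cardinal.mk (Σ β : omega1.ToType,
          {t : T // τ.ht t = ((e.symm β : Set.Iio omega1) : Ordinal)})
        = Cardinal.sum (fun β : omega1.ToType =>
            Cardinal.mk {t : T // τ.ht t = ((e.symm β : Set.Iio omega1) : Ordinal)}) :=
          Cardinal.mk_sigma _
      _ ≤ Cardinal.sum (fun _ : omega1.ToType => (ℵ₀ : Cardinal)) :=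
          Cardinal.sum_le_sum _ _ hcount
      _ = Cardinal.lift (Cardinal.mk omega1.ToType) * Cardinal.lift ℵ₀ :=
          Cardinal.sum_const _ _
      _ = Cardinal.mk omega1.ToType * ℵ₀ := by
          rw [Cardinal.lift_uzero, Cardinal.lift_aleph0]
      _ = Cardinal.aleph 1 * ℵ₀ := by
          rw [Cardinal.mk_toType, omega1, Cardinal.card_ord]
      _ = Cardinal.aleph 1 := Cardinal.mul_aleph0_eq (Cardinal.aleph0_le_aleph 1)
  exact le_trans h0 (by rw [Cardinal.lift_uzero]; exact h1)

/-- Branches containing a point outside `V` are few, provided each point outside `V`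
admits at most `ℵ₁` branches through it. -/
lemma bad_branches_le (τ : O1TreeStr T) (U V A : Set T) (hAU : A ⊆ U)
    (hV : ∀ t, t ∉ V →
      Cardinal.mk {b : Set T // IsBranchIn τ (U ∩ {y | y ≤ t ∨ t ≤ y}) b} ≤ Cardinal.aleph 1) :
    Cardinal.mk {b : Set T // IsBranchIn τ A b ∧ ¬ b ⊆ V} ≤ Cardinal.aleph 1 := by
  classical
  have key : ∀ b : {b : Set T // IsBranchIn τ A b ∧ ¬ b ⊆ V},
      ∃ t, t ∉ V ∧ IsBranchIn τ (U ∩ {y | y ≤ t ∨ t ≤ y}) b.1 := by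
    rintro ⟨b, hb, hbV⟩
    obtain ⟨t, htb, htV⟩ := Set.not_subset.mp hbV
    refine ⟨t, htV, ?_, hb.2.1, hb.2.2⟩
    intro u hu
    refine ⟨hAU (hb.1 hu), ?_⟩
    rcases eq_or_ne u t with rfl | hne
    · exact Or.inl le_rfl
    · exact hb.2.1 hu htb hne
  choose f hf1 hf2 using key
  have hinj : Function.Injective
      (fun b : {b : Set T // IsBranchIn τ A b ∧ ¬ b ⊆ V} =>
        (⟨⟨f b, hf1 b⟩, ⟨b.1, hf2 b⟩⟩ :
          Σ t : {t : T // t ∉ V},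
            {b : Set T // IsBranchIn τ (U ∩ {y | y ≤ t.1 ∨ t.1 ≤ y}) b})) := by
    intro b b' h
    exact Subtype.ext (congrArg (fun p : (Σ t : {t : T // t ∉ V},
      {b : Set T // IsBranchIn τ (U ∩ {y | y ≤ t.1 ∨ t.1 ≤ y}) b}) => p.2.1) h)
  calc Cardinal.mk {b : Set T // IsBranchIn τ A b ∧ ¬ b ⊆ V}
      ≤ Cardinal.mk (Σ t : {t : T // t ∉ V},
          {b : Set T // IsBranchIn τ (U ∩ {y | y ≤ t.1 ∨ t.1 ≤ y}) b}) :=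
        Cardinal.mk_le_of_injective hinj
    _ = Cardinal.sum (fun t : {t : T // t ∉ V} =>
          Cardinal.mk {b : Set T // IsBranchIn τ (U ∩ {y | y ≤ t.1 ∨ t.1 ≤ y}) b}) :=
        Cardinal.mk_sigma _
    _ ≤ Cardinal.sum (fun _ : {t : T // t ∉ V} => Cardinal.aleph 1) :=
        Cardinal.sum_le_sum _ _ (fun t => hV t.1 t.2)
    _ = Cardinal.mk {t : T // t ∉ V} * Cardinal.aleph 1 := Cardinal.sum_const' _ _
    _ ≤ Cardinal.aleph 1 * Cardinal.aleph 1 :=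
        mul_le_mul_left (le_trans (Cardinal.mk_subtype_le _) (mk_le_aleph_one τ)) _
    _ = Cardinal.aleph 1 := Cardinal.mul_eq_self (Cardinal.aleph0_le_aleph 1)

lemma lt_aleph_two_iff {c : Cardinal} : c < Cardinal.aleph 2 ↔ c ≤ Cardinal.aleph 1 := by
  have h2 : (2 : Ordinal) = Order.succ 1 := by
    rw [← Ordinal.add_one_eq_succ]; exact one_add_one_eq_two.symm
  rw [h2, Cardinal.aleph_succ, Order.lt_succ_iff]

/-- If T is an everywhere Kurepa tree and U is a downward closed Kurepa subtree of T,
then U contains a (nonempty) downward closed everywhere Kurepa subtree of T. -/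
theorem stmt0 (τ : O1TreeStr T) (hT : EverywhereKurepa τ)
    (U : Set T) (hdc : DownwardClosed τ U) (hK : IsKurepaSet τ U) :
    ∃ V : Set T, V ⊆ U ∧ V.Nonempty ∧ DownwardClosed τ V ∧
      ∀ x ∈ V, IsKurepaSet τ (V ∩ {y | y ≤ x ∨ x ≤ y}) := by
  classical
  set V : Set T := {t | t ∈ U ∧ Cardinal.aleph 2 ≤
      Cardinal.mk {b : Set T // IsBranchIn τ (U ∩ {y | y ≤ t ∨ t ≤ y}) b}} with hVdef
  -- the fiber bound for points outside V
  have hVbound : ∀ t, t ∉ V →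
      Cardinal.mk {b : Set T // IsBranchIn τ (U ∩ {y | y ≤ t ∨ t ≤ y}) b} ≤
        Cardinal.aleph 1 := by
    intro t ht
    by_cases htU : t ∈ U
    · have hn : ¬ Cardinal.aleph 2 ≤
          Cardinal.mk {b : Set T // IsBranchIn τ (U ∩ {y | y ≤ t ∨ t ≤ y}) b} :=
        fun h => ht ⟨htU, h⟩
      exact lt_aleph_two_iff.mp (lt_of_not_ge hn)
    · haveI : IsEmpty {b : Set T // IsBranchIn τ (U ∩ {y | y ≤ t ∨ t ≤ y}) b} := by
        constructor
        rintro ⟨b, hb⟩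
        have htb : t ∈ b := mem_of_branch_le τ hb (fun u hu => (hb.1 hu).2) le_rfl
        exact htU (hb.1 htb).1
      rw [Cardinal.mk_eq_zero]
      exact zero_le
  -- extracting many branches that stay inside V
  have good : ∀ A : Set T, A ⊆ U →
      Cardinal.aleph 2 ≤ Cardinal.mk {b : Set T // IsBranchIn τ A b} →
      Cardinal.aleph 2 ≤ Cardinal.mk {b : Set T // IsBranchIn τ A b ∧ b ⊆ V} := by
    intro A hAU hA
    by_contra hlt
    have h1 : Cardinal.mk {b : Set T // IsBranchIn τ A b ∧ b ⊆ V} ≤ Cardinal.aleph 1 :=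
      lt_aleph_two_iff.mp (lt_of_not_ge hlt)
    have h2 : Cardinal.mk {b : Set T // IsBranchIn τ A b ∧ ¬ b ⊆ V} ≤ Cardinal.aleph 1 :=
      bad_branches_le τ U V A hAU hVbound
    have hsplit : {b : Set T | IsBranchIn τ A b} ⊆
        {b : Set T | IsBranchIn τ A b ∧ b ⊆ V} ∪ {b : Set T | IsBranchIn τ A b ∧ ¬ b ⊆ V} := by
      intro b hb
      by_cases h : b ⊆ V
      · exact Or.inl ⟨hb, h⟩
      · exact Or.inr ⟨hb, h⟩
    have h3 : Cardinal.mk {b : Set T // IsBranchIn τ A b} ≤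
        Cardinal.mk {b : Set T // IsBranchIn τ A b ∧ b ⊆ V} +
          Cardinal.mk {b : Set T // IsBranchIn τ A b ∧ ¬ b ⊆ V} :=
      le_trans (Cardinal.mk_le_mk_of_subset hsplit) (Cardinal.mk_union_le _ _)
    have h4 : Cardinal.aleph 2 ≤ Cardinal.aleph 1 := by
      calc Cardinal.aleph 2 ≤ _ := hA
        _ ≤ _ := h3
        _ ≤ Cardinal.aleph 1 + Cardinal.aleph 1 := add_le_add h1 h2
        _ = Cardinal.aleph 1 := Cardinal.add_eq_self (Cardinal.aleph0_le_aleph 1)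
    exact absurd h4 (not_le.mpr (Cardinal.aleph_lt_aleph.mpr one_lt_two))
  -- V is nonempty
  have homega1pos : (0 : Ordinal) < omega1 := by
    have := Cardinal.ord_lt_ord.mpr (Cardinal.aleph_pos 1)
    simpa [omega1, Cardinal.ord_zero] using this
  have hgoodU := good U Set.Subset.rfl hK
  have hpos : (0 : Cardinal) <
      Cardinal.mk {b : Set T // IsBranchIn τ U b ∧ b ⊆ V} :=
    lt_of_lt_of_le (Cardinal.aleph_pos 2) hgoodU
  obtain ⟨b₀, hb₀, hb₀V⟩ := Cardinal.mk_ne_zero_iff.mp (ne_of_gt hpos)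
  obtain ⟨t₀, ht₀b, _⟩ := hb₀.2.2 0 homega1pos
  -- V is downward closed
  have hVdc : DownwardClosed τ V := by
    intro s t htV hst
    refine ⟨hdc s t htV.1 hst, le_trans htV.2 (Cardinal.mk_subtype_mono ?_)⟩
    intro b hb
    have hsb : s ∈ b := mem_of_branch_le τ hb (fun u hu => (hb.1 hu).2) hst
    refine ⟨?_, hb.2.1, hb.2.2⟩
    intro u hu
    refine ⟨(hb.1 hu).1, ?_⟩
    rcases eq_or_ne u s with rfl | hne
    · exact Or.inl le_rfl
    · exact hb.2.1 hu hsb hne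
  refine ⟨V, fun t ht => ht.1, ⟨t₀, hb₀V ht₀b⟩, hVdc, ?_⟩
  intro x hx
  have h := good (U ∩ {y | y ≤ x ∨ x ≤ y}) Set.inter_subset_left hx.2
  refine le_trans h (Cardinal.mk_subtype_mono ?_)
  rintro b ⟨hb, hbV⟩
  exact ⟨fun u hu => ⟨hbV hu, (hb.1 hu).2⟩, hb.2.1, hb.2.2⟩
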